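/- (Hölder's inequality in Lorentz spaces) Let 1 ≤ p, p₁, p₂ < ∞ and 1 ≤ q, q₁, q₂ ≤ ∞ satisfy 1/p = 1/p₁ + 1/p₂ and 1/q = 1/q₁ + 1/q₂. Then there is a constant C such that ‖f·g‖_{L^{p,q}} ≤ C ‖f‖_{L^{p₁,q₁}} ‖g‖_{L^{p₂,q₂}} for all measurable f, g. -/

import Mathlib

open MeasureTheory ENNReal Set

/-- The Lorentz quasi-norm `‖f‖_{L^{p,q}} = ‖ λ · μ({|f| > λ})^{1/p} ‖_{L^q((0,∞), dλ/λ)}`,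
with the usual supremum modification for `q = ∞`. -/
noncomputable def lorentzNorm {α : Type*} [MeasurableSpace α] (μ : Measure α)
    (p : ℝ) (q : ℝ≥0∞) (f : α → ℂ) : ℝ≥0∞ :=
  if q = ⊤ then
    ⨆ (l : ℝ) (_ : 0 < l), ENNReal.ofReal l * (μ {x | l < ‖f x‖}) ^ (1 / p)
  else
    (∫⁻ l in Set.Ioi (0 : ℝ),
        (ENNReal.ofReal l * (μ {x | l < ‖f x‖}) ^ (1 / p)) ^ q.toReal
          * (ENNReal.ofReal l)⁻¹) ^ (1 / q.toReal)


lemma aux_lintegral_Ioo {c r : ℝ} (hc : 0 ≤ c) (hr : 0 < r) :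
    ∫⁻ t in Set.Ioo 0 c, ENNReal.ofReal t ^ (r - 1) = ENNReal.ofReal c ^ r / ENNReal.ofReal r := by
  have h1 : ∫⁻ t in Set.Ioo 0 c, ENNReal.ofReal t ^ (r - 1)
      = ∫⁻ t in Set.Ioo 0 c, ENNReal.ofReal (t ^ (r - 1)) := by
    refine setLIntegral_congr_fun measurableSet_Ioo ?_
    intro t ht
    exact ENNReal.ofReal_rpow_of_pos ht.1
  rw [h1]
  have hint : IntegrableOn (fun t : ℝ => t ^ (r - 1)) (Set.Ioo 0 c) := by
    have := (intervalIntegral.intervalIntegrable_rpow' (a := 0) (b := c) (r := r - 1) (by linarith)).1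
    have h2 : Set.Ioo (0:ℝ) c ⊆ Set.Ioc 0 c := Set.Ioo_subset_Ioc_self
    exact this.mono_set h2
  rw [← MeasureTheory.ofReal_integral_eq_lintegral_ofReal hint]
  · have : ∫ t in Set.Ioo (0:ℝ) c, t ^ (r - 1) = ∫ t in (0:ℝ)..c, t ^ (r - 1) := by
      rw [intervalIntegral.integral_of_le hc, ← MeasureTheory.integral_Ioc_eq_integral_Ioo]
    rw [this, integral_rpow (Or.inl (by linarith))]
    rw [sub_add_cancel, Real.zero_rpow hr.ne', sub_zero]
    rw [ENNReal.ofReal_div_of_pos hr, ← ENNReal.ofReal_rpow_of_nonneg hc hr.le]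
  · filter_upwards [self_mem_ae_restrict measurableSet_Ioo] with t ht
    exact Real.rpow_nonneg ht.1.le _

lemma ioi_lintegral_top {r : ℝ} (hr : 0 < r) :
    ∫⁻ t in Set.Ioi (0:ℝ), ENNReal.ofReal t ^ (r - 1) = ⊤ := by
  by_contra hne
  have key : ∀ n : ℕ, ENNReal.ofReal ((n:ℝ) ^ r / r) ≤ ∫⁻ t in Set.Ioi (0:ℝ), ENNReal.ofReal t ^ (r - 1) := by
    intro n
    have h := aux_lintegral_Ioo (c := (n:ℝ)) (n.cast_nonneg) hr
    have hle : ∫⁻ t in Set.Ioo (0:ℝ) n, ENNReal.ofReal t ^ (r - 1)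
        ≤ ∫⁻ t in Set.Ioi (0:ℝ), ENNReal.ofReal t ^ (r - 1) :=
      lintegral_mono_set Set.Ioo_subset_Ioi_self
    rw [h] at hle
    refine le_trans (le_of_eq ?_) hle
    rw [ENNReal.ofReal_div_of_pos hr, ENNReal.ofReal_rpow_of_nonneg n.cast_nonneg hr.le]
  have hto : Filter.Tendsto (fun n : ℕ => ((n:ℝ) ^ r / r)) Filter.atTop Filter.atTop := by
    apply Filter.Tendsto.atTop_div_const hr
    exact (tendsto_rpow_atTop hr).comp tendsto_natCast_atTop_atTop
  obtain ⟨n, hn⟩ := (hto.eventually_ge_atTop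
    ((∫⁻ t in Set.Ioi (0:ℝ), ENNReal.ofReal t ^ (r - 1)).toReal + 1)).exists
  have := (ENNReal.ofReal_le_iff_le_toReal hne).mp (key n)
  linarith

/-- Integral of `t^(r-1)` over a downward-closed subset of `(0,∞)`. -/
lemma down_lintegral {S : Set ℝ} (hsub : S ⊆ Set.Ioi 0)
    (hdc : ∀ a b : ℝ, a ∈ S → 0 < b → b ≤ a → b ∈ S) {r : ℝ} (hr : 0 < r) :
    ∫⁻ t in S, ENNReal.ofReal t ^ (r - 1) = (volume S) ^ r / ENNReal.ofReal r := by
  rcases Set.eq_empty_or_nonempty S with hS | hS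
  · simp [hS, ENNReal.zero_rpow_of_pos hr, ENNReal.zero_div]
  by_cases hbdd : BddAbove S
  · set c := sSup S with hc
    have hc0 : 0 < c := lt_of_lt_of_le (hsub hS.choose_spec) (le_csSup hbdd hS.choose_spec)
    have h1 : Set.Ioo 0 c ⊆ S := by
      intro x hx
      obtain ⟨y, hy, hxy⟩ := exists_lt_of_lt_csSup hS hx.2
      exact hdc y x hy hx.1 hxy.le
    have h2 : S ⊆ Set.Ioc 0 c := fun x hx => ⟨hsub hx, le_csSup hbdd hx⟩
    have hvol : volume S = ENNReal.ofReal c := by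
      apply le_antisymm
      · exact le_trans (measure_mono h2) (by rw [Real.volume_Ioc, sub_zero])
      · exact le_trans (le_of_eq (by rw [Real.volume_Ioo, sub_zero])) (measure_mono h1)
    have hIoo := aux_lintegral_Ioo hc0.le hr
    have hIoc : ∫⁻ t in Set.Ioc 0 c, ENNReal.ofReal t ^ (r - 1)
        = ∫⁻ t in Set.Ioo 0 c, ENNReal.ofReal t ^ (r - 1) :=
      (setLIntegral_congr MeasureTheory.Ioo_ae_eq_Ioc).symm
    refine le_antisymm ?_ ?_
    · rw [hvol]
      exact le_trans (lintegral_mono_set h2) (le_of_eq (hIoc.trans hIoo))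
    · rw [hvol]
      exact le_trans (le_of_eq hIoo.symm) (lintegral_mono_set h1)
  · have hS' : S = Set.Ioi 0 := by
      apply Set.Subset.antisymm hsub
      intro x hx
      obtain ⟨y, hy, hxy⟩ := not_bddAbove_iff.mp hbdd x
      exact hdc y x hy hx (le_of_lt hxy)
    rw [hS', ioi_lintegral_top hr, Real.volume_Ioi,
      ENNReal.top_rpow_of_pos hr, ENNReal.top_div_of_ne_top (by simp)]

lemma iSup_ofReal_rpow (m : ℝ≥0∞) {b : ℝ} (hb : 0 < b) :
    m ^ b = ⨆ (l : ℝ) (_ : 0 < l) (_ : ENNReal.ofReal l < m), ENNReal.ofReal l ^ b := by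
  apply le_antisymm
  · by_contra hcon
    push_neg at hcon
    obtain ⟨x, hxnn, hx1, hx2⟩ := ENNReal.lt_iff_exists_real_btwn.mp hcon
    have hx0 : 0 < x := by
      rcases lt_or_eq_of_le hxnn with h | h
      · exact h
      · rw [← h, ENNReal.ofReal_zero] at hx1
        exact absurd hx1 (by simp)
    set l := x ^ b⁻¹ with hl
    have hl0 : 0 < l := Real.rpow_pos_of_pos hx0 _
    have hlm : ENNReal.ofReal l < m := by
      have : (ENNReal.ofReal x) ^ b⁻¹ < (m ^ b) ^ b⁻¹ :=
        ENNReal.rpow_lt_rpow hx2 (by positivity)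
      rwa [← ENNReal.rpow_mul, mul_inv_cancel₀ hb.ne', ENNReal.rpow_one,
        ENNReal.ofReal_rpow_of_pos hx0] at this
    have : ENNReal.ofReal l ^ b = ENNReal.ofReal x := by
      rw [ENNReal.ofReal_rpow_of_pos hl0, hl,
        ← Real.rpow_mul hx0.le, inv_mul_cancel₀ hb.ne', Real.rpow_one]
    have hle : ENNReal.ofReal l ^ b ≤ ⨆ (l : ℝ) (_ : 0 < l) (_ : ENNReal.ofReal l < m), ENNReal.ofReal l ^ b := by
      exact le_iSup₂_of_le l hl0 (le_iSup_of_le hlm le_rfl)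
    rw [this] at hle
    exact absurd (lt_of_lt_of_le hx1 hle) (lt_irrefl _)
  · refine iSup₂_le fun l hl => iSup_le fun hlm => ?_
    exact ENNReal.rpow_le_rpow hlm.le hb.le

lemma sup_identity {φ : ℝ → ℝ≥0∞} (hφ : Antitone φ) {a b : ℝ} (ha : 0 < a) (hb : 0 < b) :
    ⨆ (l : ℝ) (_ : 0 < l), ENNReal.ofReal l ^ b * φ l ^ a
      = ⨆ (t : ℝ) (_ : 0 < t),
          ENNReal.ofReal t ^ a * (volume {l | 0 < l ∧ ENNReal.ofReal t < φ l}) ^ b := by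
  apply le_antisymm
  · refine iSup₂_le fun l hl => ?_
    rw [iSup_ofReal_rpow (φ l) ha, ENNReal.mul_iSup]
    refine iSup_le fun t => ?_
    rw [ENNReal.mul_iSup]
    refine iSup_le fun ht => ?_
    rw [ENNReal.mul_iSup]
    refine iSup_le fun htl => ?_
    have hψ : ENNReal.ofReal l ≤ volume {l' | 0 < l' ∧ ENNReal.ofReal t < φ l'} := by
      have hsub : Set.Ioc 0 l ⊆ {l' | 0 < l' ∧ ENNReal.ofReal t < φ l'} := by
        intro x hx
        exact ⟨hx.1, lt_of_lt_of_le htl (hφ hx.2)⟩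
      calc ENNReal.ofReal l = volume (Set.Ioc 0 l) := by rw [Real.volume_Ioc, sub_zero]
        _ ≤ _ := measure_mono hsub
    calc ENNReal.ofReal l ^ b * ENNReal.ofReal t ^ a
        ≤ (volume {l' | 0 < l' ∧ ENNReal.ofReal t < φ l'}) ^ b * ENNReal.ofReal t ^ a :=
          mul_le_mul' (ENNReal.rpow_le_rpow hψ hb.le) le_rfl
      _ = ENNReal.ofReal t ^ a * (volume {l' | 0 < l' ∧ ENNReal.ofReal t < φ l'}) ^ b :=
          mul_comm _ _
      _ ≤ _ := le_iSup₂_of_le t ht le_rfl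
  · refine iSup₂_le fun t ht => ?_
    rw [iSup_ofReal_rpow (volume {l | 0 < l ∧ ENNReal.ofReal t < φ l}) hb, ENNReal.mul_iSup]
    refine iSup_le fun l => ?_
    rw [ENNReal.mul_iSup]
    refine iSup_le fun hl => ?_
    rw [ENNReal.mul_iSup]
    refine iSup_le fun hlψ => ?_
    have hmem : ENNReal.ofReal t < φ l := by
      by_contra hcon
      push_neg at hcon
      have hsub : {l' | 0 < l' ∧ ENNReal.ofReal t < φ l'} ⊆ Set.Ioo 0 l := by
        intro x hx
        refine ⟨hx.1, ?_⟩
        by_contra hxl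
        push_neg at hxl
        exact absurd (lt_of_lt_of_le hx.2 (le_trans (hφ hxl) hcon)) (lt_irrefl _)
      have := measure_mono (μ := (volume : Measure ℝ)) hsub
      rw [Real.volume_Ioo, sub_zero] at this
      exact absurd (lt_of_lt_of_le hlψ this) (lt_irrefl _)
    calc ENNReal.ofReal t ^ a * ENNReal.ofReal l ^ b
        ≤ φ l ^ a * ENNReal.ofReal l ^ b :=
          mul_le_mul' (ENNReal.rpow_le_rpow hmem.le ha.le) le_rfl
      _ = ENNReal.ofReal l ^ b * φ l ^ a := mul_comm _ _
      _ ≤ _ := le_iSup₂_of_le l hl le_rfl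

lemma vol_lt_set (c : ℝ≥0∞) : volume {t : ℝ | 0 < t ∧ ENNReal.ofReal t < c} = c := by
  rcases eq_or_ne c ⊤ with hc | hc
  · have : {t : ℝ | 0 < t ∧ ENNReal.ofReal t < c} = Set.Ioi 0 := by
      ext t; simp [hc, ofReal_lt_top]
    rw [this, Real.volume_Ioi, hc]
  · have : {t : ℝ | 0 < t ∧ ENNReal.ofReal t < c} = Set.Ioo 0 c.toReal := by
      ext t
      simp only [Set.mem_setOf_eq, Set.mem_Ioo]
      constructor
      · rintro ⟨ht, hlt⟩
        exact ⟨ht, (ENNReal.ofReal_lt_iff_lt_toReal ht.le hc).mp hlt⟩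
      · rintro ⟨ht, hlt⟩
        exact ⟨ht, (ENNReal.ofReal_lt_iff_lt_toReal ht.le hc).mpr hlt⟩
    rw [this, Real.volume_Ioo, sub_zero, ENNReal.ofReal_toReal hc]

lemma rpow_eq_lintegral (c : ℝ≥0∞) {ρ : ℝ} (hρ : 0 < ρ) :
    c ^ ρ = ENNReal.ofReal ρ *
      ∫⁻ t in {t : ℝ | 0 < t ∧ ENNReal.ofReal t < c}, ENNReal.ofReal t ^ (ρ - 1) := by
  have h := down_lintegral (S := {t : ℝ | 0 < t ∧ ENNReal.ofReal t < c})
    (fun t ht => ht.1) ?_ hρ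
  · rw [h, vol_lt_set]
    rw [ENNReal.mul_div_cancel (by simpa using hρ) ENNReal.ofReal_ne_top]
  · intro x y hx hy hyx
    exact ⟨hy, lt_of_le_of_lt (ENNReal.ofReal_le_ofReal hyx) hx.2⟩

lemma key_identity {φ : ℝ → ℝ≥0∞} (hφ : Antitone φ) {β ρ : ℝ} (hβ : 0 < β) (hρ : 0 < ρ) :
    ∫⁻ l in Set.Ioi (0:ℝ), ENNReal.ofReal l ^ (β - 1) * φ l ^ ρ
      = (ENNReal.ofReal ρ / ENNReal.ofReal β) *
          ∫⁻ t in Set.Ioi (0:ℝ),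
            ENNReal.ofReal t ^ (ρ - 1) * (volume {l | 0 < l ∧ ENNReal.ofReal t < φ l}) ^ β := by
  have hφm : Measurable φ := hφ.measurable
  set ν := volume.restrict (Set.Ioi (0:ℝ)) with hν
  set f : ℝ → ℝ → ℝ≥0∞ := fun l t =>
    ENNReal.ofReal l ^ (β - 1) * (ENNReal.ofReal t ^ (ρ - 1) *
      Set.indicator {p : ℝ × ℝ | ENNReal.ofReal p.2 < φ p.1} 1 (l, t)) with hfdef
  have hSm : MeasurableSet {p : ℝ × ℝ | ENNReal.ofReal p.2 < φ p.1} := by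
    apply measurableSet_lt
    · exact ENNReal.measurable_ofReal.comp measurable_snd
    · exact hφm.comp measurable_fst
  have hfm : Measurable (Function.uncurry f) := by
    apply Measurable.mul
    · exact (ENNReal.measurable_ofReal.comp measurable_fst).pow_const _
    · apply Measurable.mul
      · exact (ENNReal.measurable_ofReal.comp measurable_snd).pow_const _
      · exact measurable_const.indicator hSm
  have hne : ∀ u : ℝ, 0 < u → ∀ e : ℝ, ENNReal.ofReal u ^ e ≠ ⊤ := by
    intro u hu e
    simp [ENNReal.rpow_eq_top_iff, ENNReal.ofReal_eq_zero, not_le.mpr hu, ENNReal.ofReal_ne_top]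
  -- the inner integral over t, for fixed l > 0
  have hinner : ∀ l : ℝ, 0 < l → ∫⁻ t, f l t ∂ν
      = ENNReal.ofReal l ^ (β - 1) *
        ∫⁻ t in {t : ℝ | 0 < t ∧ ENNReal.ofReal t < φ l}, ENNReal.ofReal t ^ (ρ - 1) := by
    intro l hl
    rw [lintegral_const_mul' _ _ (hne l hl _)]
    congr 1
    have hind : (fun t => ENNReal.ofReal t ^ (ρ - 1) *
        Set.indicator {p : ℝ × ℝ | ENNReal.ofReal p.2 < φ p.1} 1 (l, t))
        = Set.indicator {t : ℝ | ENNReal.ofReal t < φ l} (fun t => ENNReal.ofReal t ^ (ρ - 1)) := by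
      funext t
      by_cases h : ENNReal.ofReal t < φ l
      · simp [Set.indicator, Set.mem_setOf_eq, h]
      · simp [Set.indicator, Set.mem_setOf_eq, h]
    rw [hind]
    have hAm : MeasurableSet {t : ℝ | ENNReal.ofReal t < φ l} :=
      measurableSet_lt ENNReal.measurable_ofReal measurable_const
    rw [hν, lintegral_indicator hAm, Measure.restrict_restrict hAm]
    have hset : {t : ℝ | ENNReal.ofReal t < φ l} ∩ Set.Ioi 0
        = {t : ℝ | 0 < t ∧ ENNReal.ofReal t < φ l} := by
      ext x
      simp only [Set.mem_inter_iff, Set.mem_setOf_eq, Set.mem_Ioi]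
      tauto
    rw [hset]
  -- the inner integral over l, for fixed t > 0
  have houter : ∀ t : ℝ, 0 < t → ∫⁻ l, f l t ∂ν
      = ENNReal.ofReal t ^ (ρ - 1) *
        ∫⁻ l in {l : ℝ | 0 < l ∧ ENNReal.ofReal t < φ l}, ENNReal.ofReal l ^ (β - 1) := by
    intro t ht
    have : (fun l => f l t) = fun l => ENNReal.ofReal t ^ (ρ - 1) *
        (Set.indicator {l : ℝ | ENNReal.ofReal t < φ l}
          (fun l => ENNReal.ofReal l ^ (β - 1)) l) := by
      funext l
      by_cases h : ENNReal.ofReal t < φ l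
      · simp only [hfdef, Set.indicator, Set.mem_setOf_eq, h, if_true, Pi.one_apply]
        ring
      · simp [hfdef, Set.indicator, Set.mem_setOf_eq, h]
    rw [this, lintegral_const_mul' _ _ (hne t ht _)]
    congr 1
    have hAm : MeasurableSet {l : ℝ | ENNReal.ofReal t < φ l} :=
      measurableSet_lt measurable_const hφm
    rw [hν, lintegral_indicator hAm, Measure.restrict_restrict hAm]
    have hset : {l : ℝ | ENNReal.ofReal t < φ l} ∩ Set.Ioi 0
        = {l : ℝ | 0 < l ∧ ENNReal.ofReal t < φ l} := by
      ext x
      simp only [Set.mem_inter_iff, Set.mem_setOf_eq, Set.mem_Ioi]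
      tauto
    rw [hset]
  -- main chain
  calc ∫⁻ l in Set.Ioi (0:ℝ), ENNReal.ofReal l ^ (β - 1) * φ l ^ ρ
      = ∫⁻ l, ENNReal.ofReal ρ * ∫⁻ t, f l t ∂ν ∂ν := by
        refine setLIntegral_congr_fun measurableSet_Ioi
          (fun l hl => ?_)
        rw [hinner l hl, ← mul_assoc, mul_comm (ENNReal.ofReal ρ) _, mul_assoc]
        congr 1
        exact rpow_eq_lintegral (φ l) hρ
    _ = ENNReal.ofReal ρ * ∫⁻ t, ∫⁻ l, f l t ∂ν ∂ν := by
        rw [lintegral_const_mul' _ _ ENNReal.ofReal_ne_top]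
        congr 1
        exact lintegral_lintegral_swap (hfm.aemeasurable)
    _ = ENNReal.ofReal ρ * ∫⁻ t in Set.Ioi (0:ℝ), ENNReal.ofReal t ^ (ρ - 1) *
          ((volume {l | 0 < l ∧ ENNReal.ofReal t < φ l}) ^ β / ENNReal.ofReal β) := by
        congr 1
        refine setLIntegral_congr_fun measurableSet_Ioi
          (fun t ht => ?_)
        have hd := down_lintegral (S := {l | 0 < l ∧ ENNReal.ofReal t < φ l})
          (fun l hl => hl.1)
          (fun a b ha hb hba => ⟨hb, lt_of_lt_of_le ha.2 (hφ hba)⟩) hβ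
        rw [houter t ht, hd]
    _ = (ENNReal.ofReal ρ / ENNReal.ofReal β) *
          ∫⁻ t in Set.Ioi (0:ℝ),
            ENNReal.ofReal t ^ (ρ - 1) * (volume {l | 0 < l ∧ ENNReal.ofReal t < φ l}) ^ β := by
        rw [ENNReal.div_eq_inv_mul, mul_comm (ENNReal.ofReal β)⁻¹ _, mul_assoc]
        congr 1
        rw [← lintegral_const_mul' _ _ (by simp [hβ] : (ENNReal.ofReal β)⁻¹ ≠ ⊤)]
        refine lintegral_congr fun t => ?_
        rw [ENNReal.div_eq_inv_mul]
        ring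

lemma K_aux {α : Type*} [MeasurableSpace α] (μ : Measure α) (F : α → ℝ) {t u : ℝ} (hu : 0 < u)
    (h : volume {l | 0 < l ∧ ENNReal.ofReal t < μ {x | l < F x}} < ENNReal.ofReal u) :
    μ {x | u < F x} ≤ ENNReal.ofReal t := by
  by_contra hcon
  push_neg at hcon
  have hsub : Set.Ioc 0 u ⊆ {l | 0 < l ∧ ENNReal.ofReal t < μ {x | l < F x}} := by
    intro l hl
    refine ⟨hl.1, lt_of_lt_of_le hcon (measure_mono fun x hx => lt_of_le_of_lt hl.2 hx)⟩
  have := measure_mono (μ := (volume : Measure ℝ)) hsub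
  rw [Real.volume_Ioc, sub_zero] at this
  exact absurd (lt_of_le_of_lt this h) (lt_irrefl _)

lemma dist_small {α : Type*} [MeasurableSpace α] (μ : Measure α) (F : α → ℝ) {t : ℝ}
    (h : volume {l | 0 < l ∧ ENNReal.ofReal t < μ {x | l < F x}} = 0) (l : ℝ) (hl : 0 < l) :
    μ {x | l < F x} ≤ ENNReal.ofReal t := by
  apply K_aux μ F hl
  rw [h]
  exact ENNReal.ofReal_pos.mpr hl

lemma rearr_mul {α : Type*} [MeasurableSpace α] (μ : Measure α) (f g : α → ℂ) {t : ℝ}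
    (ht : 0 < t) :
    volume {l | 0 < l ∧ ENNReal.ofReal (2*t) < μ {x | l < ‖f x * g x‖}}
      ≤ volume {l | 0 < l ∧ ENNReal.ofReal t < μ {x | l < ‖f x‖}}
        * volume {l | 0 < l ∧ ENNReal.ofReal t < μ {x | l < ‖g x‖}} := by
  set A := volume {l | 0 < l ∧ ENNReal.ofReal t < μ {x | l < ‖f x‖}} with hA
  set B := volume {l | 0 < l ∧ ENNReal.ofReal t < μ {x | l < ‖g x‖}} with hB
  -- main claim
  have main : ∀ l : ℝ, 0 < l → A * B < ENNReal.ofReal l →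
      μ {x | l < ‖f x * g x‖} ≤ ENNReal.ofReal (2*t) := by
    intro l hl hlAB
    have hone : ∀ (F : α → ℝ), (∀ x, l < ‖f x * g x‖ → 0 < F x) →
        volume {u | 0 < u ∧ ENNReal.ofReal t < μ {x | u < F x}} = 0 →
        μ {x | l < ‖f x * g x‖} ≤ ENNReal.ofReal (2*t) := by
      intro F hpos h0
      have hsub : {x | l < ‖f x * g x‖} ⊆ ⋃ n : ℕ, {x | 1/((n:ℝ)+1) < F x} := by
        intro x hx
        obtain ⟨n, hn⟩ := exists_nat_one_div_lt (hpos x hx)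
        exact Set.mem_iUnion.mpr ⟨n, hn⟩
      refine le_trans (measure_mono hsub) ?_
      have hdir : Monotone (fun n : ℕ => {x | 1/((n:ℝ)+1) < F x}) := by
        intro m n hmn x hx
        simp only [Set.mem_setOf_eq] at hx ⊢
        refine lt_of_le_of_lt ?_ hx
        have hmn' : (m:ℝ) + 1 ≤ (n:ℝ) + 1 := by exact_mod_cast by omega
        exact one_div_le_one_div_of_le (by positivity) hmn'
      rw [hdir.directed_le.measure_iUnion]
      refine iSup_le fun n => le_trans (dist_small μ F h0 _ (by positivity)) ?_
      exact ENNReal.ofReal_le_ofReal (by linarith)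
    rcases eq_or_ne A 0 with hA0 | hA0
    · refine hone (fun x => ‖f x‖) (fun x hx => ?_) hA0
      by_contra hc
      push_neg at hc
      have : ‖f x * g x‖ ≤ 0 := by
        rw [norm_mul]
        exact mul_nonpos_of_nonpos_of_nonneg hc (norm_nonneg _)
      linarith
    rcases eq_or_ne B 0 with hB0 | hB0
    · refine hone (fun x => ‖g x‖) (fun x hx => ?_) hB0
      by_contra hc
      push_neg at hc
      have : ‖f x * g x‖ ≤ 0 := by
        rw [norm_mul]
        exact mul_nonpos_of_nonneg_of_nonpos (norm_nonneg _) hc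
      linarith
    -- both nonzero; they are finite since A * B < ∞
    have hABt : A * B ≠ ⊤ := (lt_of_lt_of_le hlAB le_top).ne
    have hAt : A ≠ ⊤ := fun h => hABt (by rw [h]; exact ENNReal.top_mul hB0)
    have hBt : B ≠ ⊤ := fun h => hABt (by rw [h]; exact ENNReal.mul_top hA0)
    set a := A.toReal with ha
    set b := B.toReal with hb
    have ha0 : 0 < a := ENNReal.toReal_pos hA0 hAt
    have hb0 : 0 < b := ENNReal.toReal_pos hB0 hBt
    have hab : a * b < l := by
      have : ENNReal.ofReal (a*b) < ENNReal.ofReal l := by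
        rw [ENNReal.ofReal_mul ha0.le, ha, hb, ENNReal.ofReal_toReal hAt,
          ENNReal.ofReal_toReal hBt]
        exact hlAB
      exact (ENNReal.ofReal_lt_ofReal_iff_of_nonneg (by positivity)).mp this
    set c := Real.sqrt (l/(a*b)) with hc
    have hc1 : 1 < c := by
      rw [hc]
      rw [show (1:ℝ) = Real.sqrt 1 by simp]
      apply Real.sqrt_lt_sqrt (by norm_num)
      rw [lt_div_iff₀ (by positivity)]
      linarith
    have hcsq : a * c * (b * c) = l := by
      have : c * c = l / (a*b) := Real.mul_self_sqrt (by positivity)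
      field_simp at this ⊢
      nlinarith [this]
    have hKf : μ {x | a * c < ‖f x‖} ≤ ENNReal.ofReal t := by
      apply K_aux μ _ (by positivity)
      rw [← hA]
      calc A = A * 1 := (mul_one A).symm
        _ < A * ENNReal.ofReal c := by
            rw [ENNReal.mul_lt_mul_iff_right hA0 hAt]
            exact_mod_cast (by rw [← ENNReal.ofReal_one]; exact ENNReal.ofReal_lt_ofReal_iff_of_nonneg (by norm_num) |>.mpr hc1)
        _ = ENNReal.ofReal (a * c) := by
            rw [ENNReal.ofReal_mul ha0.le, ha, ENNReal.ofReal_toReal hAt]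
    have hKg : μ {x | b * c < ‖g x‖} ≤ ENNReal.ofReal t := by
      apply K_aux μ _ (by positivity)
      rw [← hB]
      calc B = B * 1 := (mul_one B).symm
        _ < B * ENNReal.ofReal c := by
            rw [ENNReal.mul_lt_mul_iff_right hB0 hBt]
            exact_mod_cast (by rw [← ENNReal.ofReal_one]; exact ENNReal.ofReal_lt_ofReal_iff_of_nonneg (by norm_num) |>.mpr hc1)
        _ = ENNReal.ofReal (b * c) := by
            rw [ENNReal.ofReal_mul hb0.le, hb, ENNReal.ofReal_toReal hBt]
    have hsub : {x | l < ‖f x * g x‖} ⊆ {x | a * c < ‖f x‖} ∪ {x | b * c < ‖g x‖} := by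
      intro x hx
      by_contra hcon
      simp only [Set.mem_union, Set.mem_setOf_eq, not_or, not_lt] at hcon
      have : ‖f x * g x‖ ≤ l := by
        rw [norm_mul, ← hcsq]
        exact mul_le_mul hcon.1 hcon.2 (norm_nonneg _) (by positivity)
      exact absurd hx (not_lt.mpr this)
    calc μ {x | l < ‖f x * g x‖} ≤ μ {x | a * c < ‖f x‖} + μ {x | b * c < ‖g x‖} :=
          le_trans (measure_mono hsub) (measure_union_le _ _)
      _ ≤ ENNReal.ofReal t + ENNReal.ofReal t := add_le_add hKf hKg
      _ = ENNReal.ofReal (2*t) := by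
          rw [← ENNReal.ofReal_add ht.le ht.le]
          ring_nf
  -- conclude
  rcases eq_or_ne (A * B) ⊤ with hABt | hABt
  · rw [hABt]; exact le_top
  have hsub : {l | 0 < l ∧ ENNReal.ofReal (2*t) < μ {x | l < ‖f x * g x‖}}
      ⊆ Set.Ioc 0 (A*B).toReal := by
    intro l hl
    refine ⟨hl.1, ?_⟩
    by_contra hc
    push_neg at hc
    have : A * B < ENNReal.ofReal l := by
      calc A * B = ENNReal.ofReal ((A*B).toReal) := (ENNReal.ofReal_toReal hABt).symm
        _ < ENNReal.ofReal l := ENNReal.ofReal_lt_ofReal_iff_of_nonneg ENNReal.toReal_nonneg |>.mpr hc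
    exact absurd hl.2 (not_lt.mpr (main l hl.1 this))
  refine le_trans (measure_mono hsub) ?_
  rw [Real.volume_Ioc, sub_zero, ENNReal.ofReal_toReal hABt]

lemma half_substitution (G : ℝ → ℝ≥0∞) :
    ∫⁻ t in Set.Ioi (0:ℝ), G (t/2) = 2 * ∫⁻ s in Set.Ioi (0:ℝ), G s := by
  set e := MeasurableEquiv.mulLeft₀ (2:ℝ) two_ne_zero with he
  have hcoe : ⇑e = ((2:ℝ) * ·) := rfl
  set I : ℝ → ℝ≥0∞ := Set.indicator (Set.Ioi (0:ℝ)) (fun t => G (t/2)) with hI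
  have h1 : ∫⁻ t in Set.Ioi (0:ℝ), G (t/2) = ∫⁻ t, I t := by
    rw [hI, lintegral_indicator measurableSet_Ioi]
  have h2 : (∫⁻ t, I t ∂(Measure.map (⇑e) volume))
      = ENNReal.ofReal |(2:ℝ)⁻¹| * ∫⁻ t, I t := by
    rw [hcoe, Real.map_volume_mul_left two_ne_zero, lintegral_smul_measure, smul_eq_mul]
  have h3 : (∫⁻ t, I t ∂(Measure.map (⇑e) volume)) = ∫⁻ s, I (e s) := by
    exact lintegral_map_equiv I e
  have h4 : ∀ s : ℝ, I (e s) = Set.indicator (Set.Ioi (0:ℝ)) G s := by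
    intro s
    have heq : e s = 2 * s := rfl
    rw [heq, hI]
    by_cases hs : s ∈ Set.Ioi (0:ℝ)
    · have hs' : (2:ℝ)*s ∈ Set.Ioi 0 := by
        simp only [Set.mem_Ioi] at hs ⊢
        linarith
      rw [Set.indicator_of_mem hs', Set.indicator_of_mem hs]
      norm_num
    · rw [Set.indicator_of_notMem, Set.indicator_of_notMem hs]
      simp only [Set.mem_Ioi, not_lt] at hs ⊢
      linarith
  have h5 : ∫⁻ s, I (e s) = ∫⁻ s in Set.Ioi (0:ℝ), G s := by
    simp_rw [h4]
    rw [lintegral_indicator measurableSet_Ioi]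
  have habs : ENNReal.ofReal |(2:ℝ)⁻¹| = 2⁻¹ := by
    rw [abs_of_pos (by norm_num)]
    rw [ENNReal.ofReal_inv_of_pos (by norm_num)]
    norm_num
  rw [h1]
  have := h2.symm.trans (h3.trans h5)
  rw [habs] at this
  -- this : 2⁻¹ * ∫⁻ t, I t = ∫⁻ s in Ioi 0, G s
  rw [← this, ← mul_assoc, ENNReal.mul_inv_cancel (by norm_num) (by norm_num), one_mul]

lemma dist_antitone {α : Type*} [MeasurableSpace α] (μ : Measure α) (h : α → ℂ) :
    Antitone (fun l : ℝ => μ {x | l < ‖h x‖}) :=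
  fun _ _ hll' => measure_mono fun _ hx => lt_of_le_of_lt hll' hx

lemma lorentzNorm_top_eq {α : Type*} [MeasurableSpace α] (μ : Measure α) {p' : ℝ}
    (hp' : 0 < p') (h : α → ℂ) :
    lorentzNorm μ p' ⊤ h = ⨆ (t : ℝ) (_ : 0 < t), ENNReal.ofReal t ^ (1/p') *
      volume {l | 0 < l ∧ ENNReal.ofReal t < μ {x | l < ‖h x‖}} := by
  rw [lorentzNorm, if_pos rfl]
  have key := sup_identity (dist_antitone μ h) (a := 1/p') (b := 1) (by positivity) one_pos
  simp only [ENNReal.rpow_one] at key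
  exact key

lemma lorentzNorm_eq {α : Type*} [MeasurableSpace α] (μ : Measure α) {p' : ℝ}
    (hp' : 0 < p') {q : ℝ≥0∞} (hq0 : q ≠ 0) (hqt : q ≠ ⊤) (h : α → ℂ) :
    lorentzNorm μ p' q h =
      ((ENNReal.ofReal (q.toReal/p') / ENNReal.ofReal q.toReal) *
        ∫⁻ t in Set.Ioi (0:ℝ), ENNReal.ofReal t ^ (q.toReal/p' - 1) *
          (volume {l | 0 < l ∧ ENNReal.ofReal t < μ {x | l < ‖h x‖}}) ^ q.toReal)
        ^ (1/q.toReal) := by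
  have hqtr : 0 < q.toReal := ENNReal.toReal_pos hq0 hqt
  rw [lorentzNorm, if_neg hqt]
  congr 1
  have hstep : ∫⁻ l in Set.Ioi (0:ℝ),
      (ENNReal.ofReal l * (μ {x | l < ‖h x‖}) ^ (1 / p')) ^ q.toReal * (ENNReal.ofReal l)⁻¹
      = ∫⁻ l in Set.Ioi (0:ℝ),
        ENNReal.ofReal l ^ (q.toReal - 1) * (μ {x | l < ‖h x‖}) ^ (q.toReal/p') := by
    refine setLIntegral_congr_fun measurableSet_Ioi
      (fun l hl => ?_)
    have ha0 : ENNReal.ofReal l ≠ 0 := by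
      simp only [ne_eq, ENNReal.ofReal_eq_zero, not_le]
      exact hl
    have heq : (1/p') * q.toReal = q.toReal/p' := by ring
    rw [ENNReal.mul_rpow_of_nonneg _ _ hqtr.le, ← ENNReal.rpow_mul, heq]
    have hsub : ENNReal.ofReal l ^ (q.toReal - 1)
        = ENNReal.ofReal l ^ q.toReal * (ENNReal.ofReal l)⁻¹ := by
      rw [sub_eq_add_neg, ENNReal.rpow_add _ _ ha0 ENNReal.ofReal_ne_top,
        ENNReal.rpow_neg_one]
    rw [hsub]
    ring
  rw [hstep]
  exact key_identity (dist_antitone μ h) hqtr (by positivity)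

lemma holder_top {α : Type*} [MeasurableSpace α] (μ : Measure α) {p p₁ p₂ : ℝ}
    (hp : 0 < p) (hp₁ : 0 < p₁) (hp₂ : 0 < p₂) (hpe : 1/p = 1/p₁ + 1/p₂) (f g : α → ℂ) :
    lorentzNorm μ p ⊤ (fun x => f x * g x) ≤
      ENNReal.ofReal 2 ^ (1/p) * (lorentzNorm μ p₁ ⊤ f * lorentzNorm μ p₂ ⊤ g) := by
  rw [lorentzNorm_top_eq μ hp, lorentzNorm_top_eq μ hp₁, lorentzNorm_top_eq μ hp₂]
  refine iSup₂_le fun t ht => ?_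
  set s := t/2 with hs
  have hs0 : 0 < s := by positivity
  have h2s : t = 2*s := by rw [hs]; ring
  have hψ : volume {l | 0 < l ∧ ENNReal.ofReal t < μ {x | l < ‖f x * g x‖}}
      ≤ volume {l | 0 < l ∧ ENNReal.ofReal s < μ {x | l < ‖f x‖}}
        * volume {l | 0 < l ∧ ENNReal.ofReal s < μ {x | l < ‖g x‖}} := by
    rw [h2s]
    exact rearr_mul μ f g hs0
  have hsplit : ENNReal.ofReal t ^ (1/p)
      = ENNReal.ofReal 2 ^ (1/p) * (ENNReal.ofReal s ^ (1/p₁) * ENNReal.ofReal s ^ (1/p₂)) := by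
    rw [h2s, ENNReal.ofReal_mul (by norm_num),
      ENNReal.mul_rpow_of_ne_top ENNReal.ofReal_ne_top ENNReal.ofReal_ne_top]
    congr 1
    rw [hpe, ENNReal.rpow_add _ _ (by simp [hs0] : ENNReal.ofReal s ≠ 0) ENNReal.ofReal_ne_top]
  calc ENNReal.ofReal t ^ (1/p) * volume {l | 0 < l ∧ ENNReal.ofReal t < μ {x | l < ‖f x * g x‖}}
      ≤ (ENNReal.ofReal 2 ^ (1/p) * (ENNReal.ofReal s ^ (1/p₁) * ENNReal.ofReal s ^ (1/p₂)))
          * (volume {l | 0 < l ∧ ENNReal.ofReal s < μ {x | l < ‖f x‖}}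
            * volume {l | 0 < l ∧ ENNReal.ofReal s < μ {x | l < ‖g x‖}}) := by
        rw [← hsplit]
        exact mul_le_mul' le_rfl hψ
    _ = ENNReal.ofReal 2 ^ (1/p) *
          ((ENNReal.ofReal s ^ (1/p₁) * volume {l | 0 < l ∧ ENNReal.ofReal s < μ {x | l < ‖f x‖}})
          * (ENNReal.ofReal s ^ (1/p₂) * volume {l | 0 < l ∧ ENNReal.ofReal s < μ {x | l < ‖g x‖}})) := by
        ring
    _ ≤ ENNReal.ofReal 2 ^ (1/p) *
          ((⨆ (u : ℝ) (_ : 0 < u), ENNReal.ofReal u ^ (1/p₁) *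
              volume {l | 0 < l ∧ ENNReal.ofReal u < μ {x | l < ‖f x‖}})
          * (⨆ (u : ℝ) (_ : 0 < u), ENNReal.ofReal u ^ (1/p₂) *
              volume {l | 0 < l ∧ ENNReal.ofReal u < μ {x | l < ‖g x‖}})) := by
        refine mul_le_mul' le_rfl (mul_le_mul' ?_ ?_)
        · exact le_iSup₂_of_le s hs0 le_rfl
        · exact le_iSup₂_of_le s hs0 le_rfl

lemma psi_antitone {α : Type*} [MeasurableSpace α] (μ : Measure α) (h : α → ℂ) :
    Antitone (fun s : ℝ => volume {l | 0 < l ∧ ENNReal.ofReal s < μ {x | l < ‖h x‖}}) := by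
  intro s s' hss'
  apply measure_mono
  intro l hl
  exact ⟨hl.1, lt_of_le_of_lt (ENNReal.ofReal_le_ofReal hss') hl.2⟩

lemma holder_mixed {α : Type*} [MeasurableSpace α] (μ : Measure α) {p p₁ p₂ : ℝ}
    (hp : 0 < p) (hp₁ : 0 < p₁) (hp₂ : 0 < p₂) (hpe : 1/p = 1/p₁ + 1/p₂)
    {q : ℝ≥0∞} (hq0 : q ≠ 0) (hqtop : q ≠ ⊤) :
    ∃ D : ℝ≥0∞, D ≠ ⊤ ∧ ∀ f g : α → ℂ,
      lorentzNorm μ p q (fun x => f x * g x) ≤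
        D * (lorentzNorm μ p₁ ⊤ f * lorentzNorm μ p₂ q g) := by
  set qt := q.toReal with hqt
  have hqt0 : 0 < qt := ENNReal.toReal_pos hq0 hqtop
  set K : ℝ≥0∞ := ENNReal.ofReal (qt/p) / ENNReal.ofReal qt with hK
  set K₂ : ℝ≥0∞ := ENNReal.ofReal (qt/p₂) / ENNReal.ofReal qt with hK₂
  have hKtop : K ≠ ⊤ := by
    rw [hK]
    exact (ENNReal.div_lt_top ENNReal.ofReal_ne_top (by simp [hqt0])).ne
  have hK₂0 : K₂ ≠ 0 := by
    rw [hK₂]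
    simp only [ne_eq, ENNReal.div_eq_zero_iff, ENNReal.ofReal_eq_zero, not_or, not_le]
    exact ⟨by positivity, ENNReal.ofReal_ne_top⟩
  have hK₂top : K₂ ≠ ⊤ := by
    rw [hK₂]
    exact (ENNReal.div_lt_top ENNReal.ofReal_ne_top (by simp [hqt0])).ne
  set c2 : ℝ≥0∞ := ENNReal.ofReal 2 ^ (qt/p - 1) with hc2
  have hc2top : c2 ≠ ⊤ := by
    rw [hc2]
    simp [ENNReal.rpow_eq_top_iff]
  set D₀ : ℝ≥0∞ := K * c2 * 2 * K₂⁻¹ with hD₀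
  have hD₀top : D₀ ≠ ⊤ := by
    rw [hD₀]
    refine ENNReal.mul_ne_top (ENNReal.mul_ne_top (ENNReal.mul_ne_top hKtop hc2top) (by norm_num)) ?_
    simp [hK₂0]
  refine ⟨D₀ ^ (1/qt), ENNReal.rpow_ne_top_of_nonneg (by positivity) hD₀top, fun f g => ?_⟩
  set ψm := fun t : ℝ => volume {l | 0 < l ∧ ENNReal.ofReal t < μ {x | l < ‖f x * g x‖}} with hψm
  set ψf := fun t : ℝ => volume {l | 0 < l ∧ ENNReal.ofReal t < μ {x | l < ‖f x‖}} with hψf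
  set ψg := fun t : ℝ => volume {l | 0 < l ∧ ENNReal.ofReal t < μ {x | l < ‖g x‖}} with hψg
  set N₁ := lorentzNorm μ p₁ ⊤ f with hN₁
  set N₂ := lorentzNorm μ p₂ q g with hN₂
  set J := ∫⁻ t in Set.Ioi (0:ℝ), ENNReal.ofReal t ^ (qt/p - 1) * ψm t ^ qt with hJ
  set J₂ := ∫⁻ s in Set.Ioi (0:ℝ), ENNReal.ofReal s ^ (qt/p₂ - 1) * ψg s ^ qt with hJ₂
  have hNeq : lorentzNorm μ p q (fun x => f x * g x) = (K * J) ^ (1/qt) :=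
    lorentzNorm_eq μ hp hq0 hqtop _
  have hN₂eq : N₂ ^ qt = K₂ * J₂ := by
    rw [hN₂, lorentzNorm_eq μ hp₂ hq0 hqtop g, ← ENNReal.rpow_mul, one_div,
      inv_mul_cancel₀ hqt0.ne', ENNReal.rpow_one]
  have hN₁sup : ∀ s : ℝ, 0 < s → ENNReal.ofReal s ^ (1/p₁) * ψf s ≤ N₁ := by
    intro s hs
    rw [hN₁, lorentzNorm_top_eq μ hp₁]
    exact le_iSup₂_of_le s hs le_rfl
  -- pointwise bound on the integrand of J
  have step1 : ∀ t ∈ Set.Ioi (0:ℝ), ENNReal.ofReal t ^ (qt/p - 1) * ψm t ^ qt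
      ≤ c2 * N₁ ^ qt * (ENNReal.ofReal (t/2) ^ (qt/p₂ - 1) * ψg (t/2) ^ qt) := by
    intro t ht
    rw [Set.mem_Ioi] at ht
    set s := t/2 with hs
    have hs0 : 0 < s := by positivity
    set a := ENNReal.ofReal s with ha
    have ha0 : a ≠ 0 := by simp [ha, hs0]
    have hatop : a ≠ ⊤ := ENNReal.ofReal_ne_top
    have hψmb : ψm t ≤ ψf s * ψg s := by
      have h2s : t = 2*s := by rw [hs]; ring
      rw [hψm, hψf, hψg, h2s]
      exact rearr_mul μ f g hs0
    have hψmb' : ψm t ^ qt ≤ ψf s ^ qt * ψg s ^ qt := by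
      rw [← ENNReal.mul_rpow_of_nonneg _ _ hqt0.le]
      exact ENNReal.rpow_le_rpow hψmb hqt0.le
    have hψfb : ψf s ^ qt ≤ (a ^ (qt/p₁))⁻¹ * N₁ ^ qt := by
      have h1 : ψf s ≤ (a ^ (1/p₁))⁻¹ * N₁ := by
        have h2 := hN₁sup s hs0
        have h3 : (a ^ (1/p₁))⁻¹ * (a ^ (1/p₁) * ψf s) ≤ (a ^ (1/p₁))⁻¹ * N₁ :=
          mul_le_mul' le_rfl h2
        rwa [← mul_assoc, ENNReal.inv_mul_cancel
          (by simp [ENNReal.rpow_eq_zero_iff, ha0, hatop])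
          (by simp [ENNReal.rpow_eq_top_iff, ha0, hatop]), one_mul] at h3
      calc ψf s ^ qt ≤ ((a ^ (1/p₁))⁻¹ * N₁) ^ qt := ENNReal.rpow_le_rpow h1 hqt0.le
        _ = ((a ^ (1/p₁))⁻¹) ^ qt * N₁ ^ qt := ENNReal.mul_rpow_of_nonneg _ _ hqt0.le
        _ = (a ^ (qt/p₁))⁻¹ * N₁ ^ qt := by
            have hee : (1/p₁)*qt = qt/p₁ := by ring
            rw [ENNReal.inv_rpow, ← ENNReal.rpow_mul, hee]
    have hbase : ENNReal.ofReal t ^ (qt/p - 1) = c2 * a ^ (qt/p - 1) := by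
      have h2s : t = 2*s := by rw [hs]; ring
      rw [h2s, ENNReal.ofReal_mul (by norm_num), hc2, ha,
        ENNReal.mul_rpow_of_ne_top ENNReal.ofReal_ne_top ENNReal.ofReal_ne_top]
    have hexp : a ^ (qt/p - 1) * (a ^ (qt/p₁))⁻¹ = a ^ (qt/p₂ - 1) := by
      have heq : qt/p₂ - 1 = (qt/p - 1) + (-(qt/p₁)) := by
        have : qt/p = qt/p₁ + qt/p₂ := by
          have := hpe
          field_simp at this ⊢
          nlinarith [this]
        linarith
      rw [heq, ENNReal.rpow_add _ _ ha0 hatop, ENNReal.rpow_neg]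
    calc ENNReal.ofReal t ^ (qt/p - 1) * ψm t ^ qt
        ≤ (c2 * a ^ (qt/p - 1)) * (ψf s ^ qt * ψg s ^ qt) := by
          rw [← hbase]
          exact mul_le_mul' le_rfl hψmb'
      _ ≤ (c2 * a ^ (qt/p - 1)) * (((a ^ (qt/p₁))⁻¹ * N₁ ^ qt) * ψg s ^ qt) :=
          mul_le_mul' le_rfl (mul_le_mul' hψfb le_rfl)
      _ = c2 * N₁ ^ qt * ((a ^ (qt/p - 1) * (a ^ (qt/p₁))⁻¹) * ψg s ^ qt) := by ring
      _ = c2 * N₁ ^ qt * (a ^ (qt/p₂ - 1) * ψg s ^ qt) := by rw [hexp]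
  -- integrate
  have hGmeas : Measurable (fun s : ℝ => ENNReal.ofReal s ^ (qt/p₂ - 1) * ψg s ^ qt) := by
    apply Measurable.mul
    · exact (ENNReal.measurable_ofReal.comp measurable_id).pow_const _
    · exact ((psi_antitone μ g).measurable).pow_const _
  have hGc : Measurable (fun t : ℝ => ENNReal.ofReal (t/2) ^ (qt/p₂ - 1) * ψg (t/2) ^ qt) :=
    hGmeas.comp (measurable_id.div_const 2)
  have step2 : J ≤ c2 * N₁ ^ qt * (2 * J₂) := by
    calc J ≤ ∫⁻ t in Set.Ioi (0:ℝ),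
          c2 * N₁ ^ qt * (ENNReal.ofReal (t/2) ^ (qt/p₂ - 1) * ψg (t/2) ^ qt) := by
          refine setLIntegral_mono ?_ step1
          exact hGc.const_mul _
      _ = c2 * N₁ ^ qt * ∫⁻ t in Set.Ioi (0:ℝ),
            ENNReal.ofReal (t/2) ^ (qt/p₂ - 1) * ψg (t/2) ^ qt := by
          rw [lintegral_const_mul'' _ hGc.aemeasurable]
      _ = c2 * N₁ ^ qt * (2 * J₂) := by
          rw [hJ₂, half_substitution (fun s => ENNReal.ofReal s ^ (qt/p₂ - 1) * ψg s ^ qt)]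
  have hJ₂b : J₂ = K₂⁻¹ * (N₂ ^ qt) := by
    rw [hN₂eq, ← mul_assoc, ENNReal.inv_mul_cancel hK₂0 hK₂top, one_mul]
  rw [hNeq]
  calc (K * J) ^ (1/qt) ≤ (K * (c2 * N₁ ^ qt * (2 * (K₂⁻¹ * N₂ ^ qt)))) ^ (1/qt) := by
        apply ENNReal.rpow_le_rpow _ (by positivity)
        refine mul_le_mul' le_rfl ?_
        rw [← hJ₂b]
        exact step2
    _ = (D₀ * (N₁ * N₂) ^ qt) ^ (1/qt) := by
        rw [ENNReal.mul_rpow_of_nonneg N₁ N₂ hqt0.le, hD₀]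
        ring_nf
    _ = D₀ ^ (1/qt) * (N₁ * N₂) := by
        rw [ENNReal.mul_rpow_of_nonneg _ _ (by positivity : (0:ℝ) ≤ 1/qt),
          ← ENNReal.rpow_mul, mul_one_div, div_self hqt0.ne', ENNReal.rpow_one]

lemma holder_finite {α : Type*} [MeasurableSpace α] (μ : Measure α) {p p₁ p₂ : ℝ}
    (hp : 0 < p) (hp₁ : 0 < p₁) (hp₂ : 0 < p₂) (hpe : 1/p = 1/p₁ + 1/p₂)
    {q q₁ q₂ : ℝ≥0∞} (hq0 : q ≠ 0) (hqtop : q ≠ ⊤) (hq10 : q₁ ≠ 0) (hq1top : q₁ ≠ ⊤)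
    (hq20 : q₂ ≠ 0) (hq2top : q₂ ≠ ⊤)
    (hr : 1/q.toReal = 1/q₁.toReal + 1/q₂.toReal) :
    ∃ D : ℝ≥0∞, D ≠ ⊤ ∧ ∀ f g : α → ℂ,
      lorentzNorm μ p q (fun x => f x * g x) ≤
        D * (lorentzNorm μ p₁ q₁ f * lorentzNorm μ p₂ q₂ g) := by
  set a := q.toReal with hat
  set a₁ := q₁.toReal with hat1
  set a₂ := q₂.toReal with hat2
  have ha0 : 0 < a := ENNReal.toReal_pos hq0 hqtop
  have ha10 : 0 < a₁ := ENNReal.toReal_pos hq10 hq1top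
  have ha20 : 0 < a₂ := ENNReal.toReal_pos hq20 hq2top
  have haa1 : a < a₁ := by
    have h1 : 1/a₁ < 1/a := by
      rw [hr]
      have : 0 < 1/a₂ := by positivity
      linarith
    rw [div_lt_div_iff₀ ha10 ha0] at h1
    linarith
  have haa2 : a < a₂ := by
    have h1 : 1/a₂ < 1/a := by
      rw [hr]
      have : 0 < 1/a₁ := by positivity
      linarith
    rw [div_lt_div_iff₀ ha20 ha0] at h1
    linarith
  have hconj : (a₁/a).HolderConjugate (a₂/a) := by
    rw [Real.holderConjugate_iff]
    constructor
    · exact (one_lt_div ha0).mpr haa1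
    · rw [inv_div, inv_div]
      calc a/a₁ + a/a₂ = a*(1/a₁+1/a₂) := by ring
        _ = a*(1/a) := by rw [← hr]
        _ = 1 := by field_simp
  set K : ℝ≥0∞ := ENNReal.ofReal (a/p) / ENNReal.ofReal a with hK
  set K₁ : ℝ≥0∞ := ENNReal.ofReal (a₁/p₁) / ENNReal.ofReal a₁ with hK₁
  set K₂ : ℝ≥0∞ := ENNReal.ofReal (a₂/p₂) / ENNReal.ofReal a₂ with hK₂
  have hKtop : K ≠ ⊤ := (ENNReal.div_lt_top ENNReal.ofReal_ne_top (by simp [ha0])).ne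
  have hK₁0 : K₁ ≠ 0 := by
    rw [hK₁]
    simp only [ne_eq, ENNReal.div_eq_zero_iff, ENNReal.ofReal_eq_zero, not_or, not_le]
    exact ⟨by positivity, ENNReal.ofReal_ne_top⟩
  have hK₁top : K₁ ≠ ⊤ := (ENNReal.div_lt_top ENNReal.ofReal_ne_top (by simp [ha10])).ne
  have hK₂0 : K₂ ≠ 0 := by
    rw [hK₂]
    simp only [ne_eq, ENNReal.div_eq_zero_iff, ENNReal.ofReal_eq_zero, not_or, not_le]
    exact ⟨by positivity, ENNReal.ofReal_ne_top⟩
  have hK₂top : K₂ ≠ ⊤ := (ENNReal.div_lt_top ENNReal.ofReal_ne_top (by simp [ha20])).ne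
  set c2 : ℝ≥0∞ := ENNReal.ofReal 2 ^ (a/p - 1) with hc2
  have hc2top : c2 ≠ ⊤ := by
    rw [hc2]
    simp [ENNReal.rpow_eq_top_iff]
  set D₀ : ℝ≥0∞ := K * c2 * 2 * (K₁⁻¹ ^ (a/a₁) * K₂⁻¹ ^ (a/a₂)) with hD₀
  have hD₀top : D₀ ≠ ⊤ := by
    rw [hD₀]
    refine ENNReal.mul_ne_top (ENNReal.mul_ne_top (ENNReal.mul_ne_top hKtop hc2top) (by norm_num))
      (ENNReal.mul_ne_top ?_ ?_)
    · exact ENNReal.rpow_ne_top_of_nonneg (by positivity) (by simp [hK₁0])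
    · exact ENNReal.rpow_ne_top_of_nonneg (by positivity) (by simp [hK₂0])
  refine ⟨D₀ ^ (1/a), ENNReal.rpow_ne_top_of_nonneg (by positivity) hD₀top, fun f g => ?_⟩
  set ψm := fun t : ℝ => volume {l | 0 < l ∧ ENNReal.ofReal t < μ {x | l < ‖f x * g x‖}} with hψm
  set ψf := fun t : ℝ => volume {l | 0 < l ∧ ENNReal.ofReal t < μ {x | l < ‖f x‖}} with hψf
  set ψg := fun t : ℝ => volume {l | 0 < l ∧ ENNReal.ofReal t < μ {x | l < ‖g x‖}} with hψg
  set N₁ := lorentzNorm μ p₁ q₁ f with hN₁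
  set N₂ := lorentzNorm μ p₂ q₂ g with hN₂
  set J := ∫⁻ t in Set.Ioi (0:ℝ), ENNReal.ofReal t ^ (a/p - 1) * ψm t ^ a with hJ
  set G := fun s : ℝ => ENNReal.ofReal s ^ (a/p - 1) * (ψf s ^ a * ψg s ^ a) with hG
  have hNeq : lorentzNorm μ p q (fun x => f x * g x) = (K * J) ^ (1/a) :=
    lorentzNorm_eq μ hp hq0 hqtop _
  have hN₁eq : N₁ ^ a₁ = K₁ * ∫⁻ s in Set.Ioi (0:ℝ), ENNReal.ofReal s ^ (a₁/p₁ - 1) * ψf s ^ a₁ := by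
    rw [hN₁, lorentzNorm_eq μ hp₁ hq10 hq1top f, ← ENNReal.rpow_mul, one_div,
      inv_mul_cancel₀ ha10.ne', ENNReal.rpow_one]
  have hN₂eq : N₂ ^ a₂ = K₂ * ∫⁻ s in Set.Ioi (0:ℝ), ENNReal.ofReal s ^ (a₂/p₂ - 1) * ψg s ^ a₂ := by
    rw [hN₂, lorentzNorm_eq μ hp₂ hq20 hq2top g, ← ENNReal.rpow_mul, one_div,
      inv_mul_cancel₀ ha20.ne', ENNReal.rpow_one]
  -- step 1 : pointwise
  have step1 : ∀ t ∈ Set.Ioi (0:ℝ),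
      ENNReal.ofReal t ^ (a/p - 1) * ψm t ^ a ≤ c2 * G (t/2) := by
    intro t ht
    rw [Set.mem_Ioi] at ht
    set s := t/2 with hs
    have hs0 : 0 < s := by positivity
    have hψmb : ψm t ≤ ψf s * ψg s := by
      have h2s : t = 2*s := by rw [hs]; ring
      rw [hψm, hψf, hψg, h2s]
      exact rearr_mul μ f g hs0
    have hψmb' : ψm t ^ a ≤ ψf s ^ a * ψg s ^ a := by
      rw [← ENNReal.mul_rpow_of_nonneg _ _ ha0.le]
      exact ENNReal.rpow_le_rpow hψmb ha0.le
    have hbase : ENNReal.ofReal t ^ (a/p - 1) = c2 * ENNReal.ofReal s ^ (a/p - 1) := by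
      have h2s : t = 2*s := by rw [hs]; ring
      rw [h2s, ENNReal.ofReal_mul (by norm_num), hc2,
        ENNReal.mul_rpow_of_ne_top ENNReal.ofReal_ne_top ENNReal.ofReal_ne_top]
    rw [hbase, hG, mul_assoc]
    exact mul_le_mul' le_rfl (mul_le_mul' le_rfl hψmb')
  have hψfm : Measurable ψf := (psi_antitone μ f).measurable
  have hψgm : Measurable ψg := (psi_antitone μ g).measurable
  have hGmeas : Measurable G := by
    apply Measurable.mul
    · exact (ENNReal.measurable_ofReal.comp measurable_id).pow_const _
    · exact (hψfm.pow_const _).mul (hψgm.pow_const _)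
  have hGc : Measurable (fun t : ℝ => G (t/2)) := hGmeas.comp (measurable_id.div_const 2)
  have step2 : J ≤ c2 * (2 * ∫⁻ s in Set.Ioi (0:ℝ), G s) := by
    calc J ≤ ∫⁻ t in Set.Ioi (0:ℝ), c2 * G (t/2) := by
          refine setLIntegral_mono (hGc.const_mul _) step1
      _ = c2 * ∫⁻ t in Set.Ioi (0:ℝ), G (t/2) := by
          rw [lintegral_const_mul'' _ hGc.aemeasurable]
      _ = c2 * (2 * ∫⁻ s in Set.Ioi (0:ℝ), G s) := by
          rw [half_substitution G]
  -- step 3 : Hölder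
  set U := fun s : ℝ => (ENNReal.ofReal s ^ (1/p₁ - 1/a₁) * ψf s) ^ a with hU
  set V := fun s : ℝ => (ENNReal.ofReal s ^ (1/p₂ - 1/a₂) * ψg s) ^ a with hV
  have hUmeas : Measurable U := by
    apply Measurable.pow_const
    exact ((ENNReal.measurable_ofReal.comp measurable_id).pow_const _).mul hψfm
  have hVmeas : Measurable V := by
    apply Measurable.pow_const
    exact ((ENNReal.measurable_ofReal.comp measurable_id).pow_const _).mul hψgm
  have hGUV : ∀ s ∈ Set.Ioi (0:ℝ), G s = U s * V s := by
    intro s hs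
    rw [Set.mem_Ioi] at hs
    have hb0 : ENNReal.ofReal s ≠ 0 := by simp [hs]
    have hbt : ENNReal.ofReal s ≠ ⊤ := ENNReal.ofReal_ne_top
    simp only [hU, hV, hG]
    rw [ENNReal.mul_rpow_of_nonneg _ _ ha0.le, ENNReal.mul_rpow_of_nonneg _ _ ha0.le,
      ← ENNReal.rpow_mul, ← ENNReal.rpow_mul]
    have hee : (1/p₁ - 1/a₁) * a + (1/p₂ - 1/a₂) * a = a/p - 1 := by
      have h1 : (1/p₁ + 1/p₂) * a = a/p := by rw [← hpe]; ring
      have h2 : (1/a₁ + 1/a₂) * a = 1 := by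
        rw [← hr]
        field_simp
      nlinarith [h1, h2]
    calc ENNReal.ofReal s ^ (a/p - 1) * (ψf s ^ a * ψg s ^ a)
        = ENNReal.ofReal s ^ ((1/p₁ - 1/a₁) * a + (1/p₂ - 1/a₂) * a) * (ψf s ^ a * ψg s ^ a) := by
          rw [hee]
      _ = ENNReal.ofReal s ^ ((1/p₁ - 1/a₁) * a) * ψf s ^ a *
            (ENNReal.ofReal s ^ ((1/p₂ - 1/a₂) * a) * ψg s ^ a) := by
          rw [ENNReal.rpow_add _ _ hb0 hbt]
          ring
  have hGint : ∫⁻ s in Set.Ioi (0:ℝ), G s = ∫⁻ s in Set.Ioi (0:ℝ), U s * V s :=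
    setLIntegral_congr_fun measurableSet_Ioi hGUV
  have hUint : ∫⁻ s in Set.Ioi (0:ℝ), U s ^ (a₁/a)
      = ∫⁻ s in Set.Ioi (0:ℝ), ENNReal.ofReal s ^ (a₁/p₁ - 1) * ψf s ^ a₁ := by
    refine setLIntegral_congr_fun measurableSet_Ioi
      (fun s hs => ?_)
    rw [Set.mem_Ioi] at hs
    have he1 : a * (a₁/a) = a₁ := by field_simp
    have he2 : (1/p₁ - 1/a₁) * a₁ = a₁/p₁ - 1 := by field_simp
    rw [hU, ← ENNReal.rpow_mul, he1, ENNReal.mul_rpow_of_nonneg _ _ ha10.le,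
      ← ENNReal.rpow_mul, he2]
  have hVint : ∫⁻ s in Set.Ioi (0:ℝ), V s ^ (a₂/a)
      = ∫⁻ s in Set.Ioi (0:ℝ), ENNReal.ofReal s ^ (a₂/p₂ - 1) * ψg s ^ a₂ := by
    refine setLIntegral_congr_fun measurableSet_Ioi
      (fun s hs => ?_)
    rw [Set.mem_Ioi] at hs
    have he1 : a * (a₂/a) = a₂ := by field_simp
    have he2 : (1/p₂ - 1/a₂) * a₂ = a₂/p₂ - 1 := by field_simp
    rw [hV, ← ENNReal.rpow_mul, he1, ENNReal.mul_rpow_of_nonneg _ _ ha20.le,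
      ← ENNReal.rpow_mul, he2]
  have step3 : ∫⁻ s in Set.Ioi (0:ℝ), G s
      ≤ (K₁⁻¹ ^ (a/a₁) * N₁ ^ a) * (K₂⁻¹ ^ (a/a₂) * N₂ ^ a) := by
    rw [hGint]
    have hH := ENNReal.lintegral_mul_le_Lp_mul_Lq (volume.restrict (Set.Ioi (0:ℝ)))
      hconj hUmeas.aemeasurable hVmeas.aemeasurable
    have hUb : (∫⁻ s in Set.Ioi (0:ℝ), U s ^ (a₁/a)) ^ (1/(a₁/a))
        ≤ K₁⁻¹ ^ (a/a₁) * N₁ ^ a := by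
      rw [hUint, one_div_div]
      have hJ₁ : ∫⁻ s in Set.Ioi (0:ℝ), ENNReal.ofReal s ^ (a₁/p₁ - 1) * ψf s ^ a₁
          = K₁⁻¹ * N₁ ^ a₁ := by
        rw [hN₁eq, ← mul_assoc, ENNReal.inv_mul_cancel hK₁0 hK₁top, one_mul]
      rw [hJ₁, ENNReal.mul_rpow_of_nonneg _ _ (by positivity : (0:ℝ) ≤ a/a₁),
        ← ENNReal.rpow_mul]
      have : a₁ * (a/a₁) = a := by field_simp
      rw [this]
    have hVb : (∫⁻ s in Set.Ioi (0:ℝ), V s ^ (a₂/a)) ^ (1/(a₂/a))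
        ≤ K₂⁻¹ ^ (a/a₂) * N₂ ^ a := by
      rw [hVint, one_div_div]
      have hJ₂ : ∫⁻ s in Set.Ioi (0:ℝ), ENNReal.ofReal s ^ (a₂/p₂ - 1) * ψg s ^ a₂
          = K₂⁻¹ * N₂ ^ a₂ := by
        rw [hN₂eq, ← mul_assoc, ENNReal.inv_mul_cancel hK₂0 hK₂top, one_mul]
      rw [hJ₂, ENNReal.mul_rpow_of_nonneg _ _ (by positivity : (0:ℝ) ≤ a/a₂),
        ← ENNReal.rpow_mul]
      have : a₂ * (a/a₂) = a := by field_simp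
      rw [this]
    calc ∫⁻ s in Set.Ioi (0:ℝ), U s * V s
        ≤ (∫⁻ s in Set.Ioi (0:ℝ), U s ^ (a₁/a)) ^ (1/(a₁/a)) *
            (∫⁻ s in Set.Ioi (0:ℝ), V s ^ (a₂/a)) ^ (1/(a₂/a)) := hH
      _ ≤ (K₁⁻¹ ^ (a/a₁) * N₁ ^ a) * (K₂⁻¹ ^ (a/a₂) * N₂ ^ a) := mul_le_mul' hUb hVb
  -- conclude
  rw [hNeq]
  calc (K * J) ^ (1/a)
      ≤ (K * (c2 * (2 * ((K₁⁻¹ ^ (a/a₁) * N₁ ^ a) * (K₂⁻¹ ^ (a/a₂) * N₂ ^ a))))) ^ (1/a) := by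
        apply ENNReal.rpow_le_rpow _ (by positivity)
        refine mul_le_mul' le_rfl (le_trans step2 ?_)
        exact mul_le_mul' le_rfl (mul_le_mul' le_rfl step3)
    _ = (D₀ * (N₁ * N₂) ^ a) ^ (1/a) := by
        rw [ENNReal.mul_rpow_of_nonneg N₁ N₂ ha0.le, hD₀]
        ring_nf
    _ = D₀ ^ (1/a) * (N₁ * N₂) := by
        rw [ENNReal.mul_rpow_of_nonneg _ _ (by positivity : (0:ℝ) ≤ 1/a),
          ← ENNReal.rpow_mul, mul_one_div, div_self ha0.ne', ENNReal.rpow_one]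

/-- Hölder's inequality in Lorentz spaces: if `1/p = 1/p₁ + 1/p₂` and
`1/q = 1/q₁ + 1/q₂`, then `‖f·g‖_{L^{p,q}} ≤ C ‖f‖_{L^{p₁,q₁}} ‖g‖_{L^{p₂,q₂}}`. -/
theorem lorentz_holder {α : Type*} [MeasurableSpace α] (μ : Measure α) [SigmaFinite μ]
    (p p₁ p₂ : ℝ) (hp : 1 ≤ p) (hp₁ : 1 ≤ p₁) (hp₂ : 1 ≤ p₂)
    (q q₁ q₂ : ℝ≥0∞) (hq : 1 ≤ q) (hq₁ : 1 ≤ q₁) (hq₂ : 1 ≤ q₂)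
    (hpe : 1 / p = 1 / p₁ + 1 / p₂) (hqe : q⁻¹ = q₁⁻¹ + q₂⁻¹) :
    ∃ C : ℝ, 0 < C ∧ ∀ f g : α → ℂ, Measurable f → Measurable g →
      lorentzNorm μ p q (fun x => f x * g x) ≤
        ENNReal.ofReal C * (lorentzNorm μ p₁ q₁ f * lorentzNorm μ p₂ q₂ g) := by
  have hp0 : 0 < p := zero_lt_one.trans_le hp
  have hp10 : 0 < p₁ := zero_lt_one.trans_le hp₁
  have hp20 : 0 < p₂ := zero_lt_one.trans_le hp₂
  have hq0 : q ≠ 0 := (zero_lt_one.trans_le hq).ne'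
  have hq10 : q₁ ≠ 0 := (zero_lt_one.trans_le hq₁).ne'
  have hq20 : q₂ ≠ 0 := (zero_lt_one.trans_le hq₂).ne'
  have key : ∃ D : ℝ≥0∞, D ≠ ⊤ ∧ ∀ f g : α → ℂ,
      lorentzNorm μ p q (fun x => f x * g x) ≤
        D * (lorentzNorm μ p₁ q₁ f * lorentzNorm μ p₂ q₂ g) := by
    by_cases hq1t : q₁ = ⊤
    · by_cases hq2t : q₂ = ⊤
      · -- q = ⊤
        have hqtop : q = ⊤ := by
          rw [hq1t, hq2t] at hqe
          simp only [ENNReal.inv_top, add_zero] at hqe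
          exact ENNReal.inv_eq_zero.mp hqe
        refine ⟨ENNReal.ofReal 2 ^ (1/p), ?_, fun f g => ?_⟩
        · simp [ENNReal.rpow_eq_top_iff]
        · rw [hqtop, hq1t, hq2t]
          exact holder_top μ hp0 hp10 hp20 hpe f g
      · -- q = q₂
        have hqq2 : q = q₂ := by
          rw [hq1t, ENNReal.inv_top, zero_add] at hqe
          exact inv_inj.mp hqe
        have hqtop : q ≠ ⊤ := by rw [hqq2]; exact hq2t
        obtain ⟨D, hD, hB⟩ := holder_mixed μ hp0 hp10 hp20 hpe hq0 hqtop
        refine ⟨D, hD, fun f g => ?_⟩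
        rw [hq1t, ← hqq2]
        exact hB f g
    · by_cases hq2t : q₂ = ⊤
      · -- q = q₁, symmetric
        have hqq1 : q = q₁ := by
          rw [hq2t, ENNReal.inv_top, add_zero] at hqe
          exact inv_inj.mp hqe
        have hqtop : q ≠ ⊤ := by rw [hqq1]; exact hq1t
        obtain ⟨D, hD, hB⟩ := holder_mixed μ hp0 hp20 hp10 (by rw [hpe]; ring) hq0 hqtop
        refine ⟨D, hD, fun f g => ?_⟩
        have hcomm : (fun x => g x * f x) = (fun x => f x * g x) := funext fun x => mul_comm _ _
        have := hB g f
        rw [hcomm] at this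
        rw [hq2t, ← hqq1]
        calc lorentzNorm μ p q (fun x => f x * g x)
            ≤ D * (lorentzNorm μ p₂ ⊤ g * lorentzNorm μ p₁ q f) := this
          _ = D * (lorentzNorm μ p₁ q f * lorentzNorm μ p₂ ⊤ g) := by ring
      · -- both finite
        have hqtop : q ≠ ⊤ := by
          intro h
          rw [h] at hqe
          simp only [ENNReal.inv_top] at hqe
          have h1 : q₁⁻¹ = 0 := by
            have := hqe.symm
            rw [add_eq_zero] at this
            exact this.1
          exact hq1t (ENNReal.inv_eq_zero.mp h1)
        have hr : 1/q.toReal = 1/q₁.toReal + 1/q₂.toReal := by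
          have h := congrArg ENNReal.toReal hqe
          rw [ENNReal.toReal_add (by simp [hq10]) (by simp [hq20]),
            ENNReal.toReal_inv, ENNReal.toReal_inv, ENNReal.toReal_inv] at h
          simpa [one_div] using h
        exact holder_finite μ hp0 hp10 hp20 hpe hq0 hqtop hq10 hq1t hq20 hq2t hr
  obtain ⟨D, hDtop, hbound⟩ := key
  refine ⟨D.toReal + 1, by positivity, fun f g hf hg => ?_⟩
  refine le_trans (hbound f g) (mul_le_mul' ?_ le_rfl)
  calc D = ENNReal.ofReal D.toReal := (ENNReal.ofReal_toReal hDtop).symm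
    _ ≤ ENNReal.ofReal (D.toReal + 1) := ENNReal.ofReal_le_ofReal (by linarith [ENNReal.toReal_nonneg (a := D)])
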